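/- For positive bounded operators A, B on a complex Hilbert space, a bounded operator X, and α ∈ [0, 1], the Heinz inequality ‖A^α X B^{1−α} + A^{1−α} X B^α‖ ≤ ‖AX + XB‖ holds, together with the refinement ‖A^α X B^{1−α} + A^{1−α} X B^α‖ ≤ (1/2)‖AX + XB‖ + (1/2)‖A^α X B^{1−α} + A^{1−α} X B^α‖ ≤ ‖AX + XB‖. -/

import Mathlib

open ContinuousLinearMap
open scoped NNReal ComplexInnerProductSpace

section HeinzAux

variable {H : Type*} [NormedAddCommGroup H] [InnerProductSpace ℂ H] [CompleteSpace H]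

/-! ### rpow helper lemmas -/

private lemma rpow_mul_rpow (A : H →L[ℂ] H) (hA : 0 ≤ A) {x y : ℝ} (hx : 0 ≤ x) (hy : 0 ≤ y)
    (h : x + y ≠ 0) : A ^ x * A ^ y = A ^ (x + y) := by
  rw [CFC.rpow_def, CFC.rpow_def, CFC.rpow_def,
    ← cfc_mul _ _ A (NNReal.continuous_rpow_const hx).continuousOn
      (NNReal.continuous_rpow_const hy).continuousOn]
  exact cfc_congr fun z hz => (NNReal.rpow_add' h z).symm

private lemma norm_rpow_le (A : H →L[ℂ] H) [Nontrivial H] (hA : 0 ≤ A) {t : ℝ} (ht : 0 ≤ t)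
    (ht1 : t ≤ 1) : ‖A ^ t‖ ≤ max 1 ‖A‖ := by
  rw [CFC.rpow_def]
  have key : ‖cfc (fun x : ℝ≥0 => x ^ t) A‖₊ ≤ max 1 ‖A‖₊ := by
    apply nnnorm_cfc_nnreal_le
    intro x hx
    have hxA : x ≤ ‖A‖₊ := spectrum.le_nnnorm_of_mem hx
    rcases le_total x 1 with h1 | h1
    · exact le_max_of_le_left (NNReal.rpow_le_one h1 ht)
    · calc x ^ t ≤ x ^ (1:ℝ) := NNReal.rpow_le_rpow_of_exponent_le h1 ht1
        _ = x := NNReal.rpow_one x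
        _ ≤ _ := le_max_of_le_right hxA
  calc ‖cfc (fun x : ℝ≥0 => x ^ t) A‖
      = ((‖cfc (fun x : ℝ≥0 => x ^ t) A‖₊ : ℝ≥0) : ℝ) := rfl
    _ ≤ ((max 1 ‖A‖₊ : ℝ≥0) : ℝ) := by exact_mod_cast key
    _ = max 1 ‖A‖ := by simp [NNReal.coe_max]

/-! ### spectral facts -/

private lemma exists_spec [Nontrivial H] (X : H →L[ℂ] H) (hX : IsSelfAdjoint X) :
    ∃ lam : ℝ, |lam| = ‖X‖ ∧ (lam : ℂ) ∈ spectrum ℂ X := by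
  obtain ⟨k, hk, hk2⟩ := spectrum.exists_nnnorm_eq_spectralRadius_of_nonempty
    (spectrum.nonempty X)
  have hre := hX.mem_spectrum_eq_re hk
  refine ⟨k.re, ?_, hre ▸ hk⟩
  have h3 : ‖k‖ = ‖X‖ := by
    rw [hX.spectralRadius_eq_nnnorm] at hk2
    have h4 : ‖k‖₊ = ‖X‖₊ := by exact_mod_cast hk2
    exact congrArg NNReal.toReal h4
  rw [← h3, hre]
  simp

private lemma isUnit_of_bounded_below (T : H →L[ℂ] H) (hT : IsSelfAdjoint T) {c : ℝ}
    (hc : 0 < c) (h : ∀ v, c * ‖v‖ ≤ ‖T v‖) : IsUnit T := by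
  have halip : AntilipschitzWith c.toNNReal⁻¹ T := by
    apply ContinuousLinearMap.antilipschitz_of_bound
    intro x
    rw [NNReal.coe_inv, Real.coe_toNNReal _ hc.le, inv_mul_eq_div, le_div_iff₀ hc]
    linarith [h x]
  have hinj : Function.Injective T := halip.injective
  have hker : LinearMap.ker (T : H →ₗ[ℂ] H) = ⊥ := LinearMap.ker_eq_bot.mpr hinj
  have hclosed : IsClosed (Set.range T) := halip.isClosed_range T.uniformContinuous
  have hcs : CompleteSpace (LinearMap.range (T : H →ₗ[ℂ] H)) := hclosed.completeSpace_coe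
  have hsymm := isSelfAdjoint_iff_isSymmetric.mp hT
  have hrange : LinearMap.range (T : H →ₗ[ℂ] H) = ⊤ := by
    rw [← Submodule.orthogonal_eq_bot_iff, Submodule.eq_bot_iff]
    intro v hv
    have hTv : T v = 0 := by
      have h5 := (Submodule.mem_orthogonal _ v).mp hv (T (T v)) (LinearMap.mem_range_self _ _)
      have h2 : ⟪T v, T v⟫ = 0 := by
        have h3 : ⟪T (T v), v⟫ = ⟪T v, T v⟫ := hsymm (T v) v
        rw [h3] at h5
        exact h5
      exact inner_self_eq_zero.mp h2
    have h6 : T v = T 0 := by simpa using hTv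
    exact hinj h6
  let e := ContinuousLinearEquiv.ofBijective (T : H →L[ℂ] H) hker hrange
  refine ⟨⟨T, (e.symm : H →L[ℂ] H), ?_, ?_⟩, rfl⟩
  · ext x
    exact e.apply_symm_apply x
  · ext x
    exact e.symm_apply_apply x

private lemma exists_approx_eigen (X : H →L[ℂ] H) (hX : IsSelfAdjoint X) {lam : ℝ}
    (hmem : (lam : ℂ) ∈ spectrum ℂ X) {c : ℝ} (hc : 0 < c) :
    ∃ u : H, ‖u‖ = 1 ∧ ‖X u - (lam : ℂ) • u‖ < c := by
  by_contra hcon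
  push_neg at hcon
  set T : H →L[ℂ] H := X - (lam : ℂ) • 1 with hTdef
  have hTsa : IsSelfAdjoint T := by
    refine hX.sub ?_
    rw [IsSelfAdjoint]
    simp [star_smul, Complex.conj_ofReal]
  have hbb : ∀ v, c * ‖v‖ ≤ ‖T v‖ := by
    intro v
    rcases eq_or_ne v 0 with rfl | hv
    · simp
    · have hnv : 0 < ‖v‖ := norm_pos_iff.mpr hv
      have hu : ‖(‖v‖⁻¹ : ℂ) • v‖ = 1 := by
        simp [norm_smul, inv_mul_cancel₀ hnv.ne']
      have := hcon ((‖v‖⁻¹ : ℂ) • v) hu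
      have hcalc : X ((‖v‖⁻¹ : ℂ) • v) - (lam : ℂ) • ((‖v‖⁻¹ : ℂ) • v)
          = (‖v‖⁻¹ : ℂ) • (T v) := by
        have hTv : T v = X v - (lam : ℂ) • v := by
          simp [hTdef, sub_apply, smul_apply, one_apply]
        rw [hTv, map_smul, smul_comm ((lam : ℂ)) ((‖v‖⁻¹ : ℂ)) v, ← smul_sub]
      rw [hcalc] at this
      rw [norm_smul] at this
      have h7 : (‖v‖)⁻¹ * ‖T v‖ ≥ c := by
        simpa using this
      calc c * ‖v‖ ≤ ((‖v‖)⁻¹ * ‖T v‖) * ‖v‖ := by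
            apply mul_le_mul_of_nonneg_right h7 hnv.le
        _ = ‖T v‖ := by field_simp
  have hunit : IsUnit T := isUnit_of_bounded_below T hTsa hc hbb
  have hnot := spectrum.mem_iff.mp hmem
  apply hnot
  have : algebraMap ℂ (H →L[ℂ] H) lam - X = -T := by
    rw [hTdef, Algebra.algebraMap_eq_smul_one]
    abel
  rw [this]
  exact hunit.neg

/-! ### the CPR inequality (self-adjoint case) -/

private lemma cpr_selfAdjoint (S S' X : H →L[ℂ] H) (hS : IsSelfAdjoint S)
    (hS' : IsSelfAdjoint S') (h1 : S * S' = 1) (h2 : S' * S = 1)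
    (hX : IsSelfAdjoint X) : 2 * ‖X‖ ≤ ‖S * X * S' + S' * X * S‖ := by
  rcases eq_or_ne X 0 with rfl | hX0
  · simp
  have hvne : ∃ v : H, X v ≠ 0 := by
    by_contra hc
    push_neg at hc
    exact hX0 (ContinuousLinearMap.ext fun v => by simp [hc v])
  obtain ⟨v0, hv0⟩ := hvne
  have : Nontrivial H := ⟨⟨v0, 0, fun h => hv0 (by rw [h]; simp)⟩⟩
  obtain ⟨lam, hlam, hmem⟩ := exists_spec X hX
  set W := S * X * S' + S' * X * S with hW
  apply le_of_forall_pos_le_add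
  intro η hη
  set c : ℝ := η / (2 * ‖S‖ ^ 2 * ‖S'‖ ^ 2 + 1) with hcdef
  have hc : 0 < c := by positivity
  obtain ⟨u, hu1, hur⟩ := exists_approx_eigen X hX hmem hc
  set r : H := X u - (lam : ℂ) • u with hrdef
  have hXu : X u = (lam : ℂ) • u + r := by rw [hrdef]; abel
  set w : H := S' u with hwdef
  have hsymmS : ∀ a b : H, ⟪S a, b⟫ = ⟪a, S b⟫ :=
    fun a b => isSelfAdjoint_iff_isSymmetric.mp hS a b
  have hsymmS' : ∀ a b : H, ⟪S' a, b⟫ = ⟪a, S' b⟫ :=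
    fun a b => isSelfAdjoint_iff_isSymmetric.mp hS' a b
  have hsymmX : ∀ a b : H, ⟪X a, b⟫ = ⟪a, X b⟫ :=
    fun a b => isSelfAdjoint_iff_isSymmetric.mp hX a b
  have hSw : S w = u := by
    rw [hwdef]
    have := DFunLike.congr_fun h1 u
    simpa using this
  -- inner product computation
  have hterm1 : ⟪(S * X * S') w, w⟫ = ⟪X (S' w), u⟫ := by
    have : (S * X * S') w = S (X (S' w)) := rfl
    rw [this, hsymmS (X (S' w)) w, hSw]
  have hterm2 : ⟪(S' * X * S) w, w⟫ = ⟪X u, S' w⟫ := by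
    have h3 : (S' * X * S) w = S' (X (S w)) := rfl
    rw [h3, hsymmS' (X (S w)) w, hSw]
  have hnormSw : ⟪S' w, u⟫ = (‖w‖ : ℂ) ^ 2 := by
    calc ⟪S' w, u⟫ = ⟪w, S' u⟫ := hsymmS' w u
      _ = ⟪w, w⟫ := by rw [← hwdef]
      _ = (‖w‖ : ℂ) ^ 2 := inner_self_eq_norm_sq_to_K w
  have hnormSw' : ⟪u, S' w⟫ = (‖w‖ : ℂ) ^ 2 := by
    calc ⟪u, S' w⟫ = ⟪S' u, w⟫ := (hsymmS' u w).symm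
      _ = ⟪w, w⟫ := by rw [← hwdef]
      _ = (‖w‖ : ℂ) ^ 2 := inner_self_eq_norm_sq_to_K w
  have hexp : ⟪W w, w⟫ = 2 * (lam : ℂ) * (‖w‖ : ℂ) ^ 2 + (⟪S' w, r⟫ + ⟪r, S' w⟫) := by
    have hadd : ⟪W w, w⟫ = ⟪(S * X * S') w, w⟫ + ⟪(S' * X * S) w, w⟫ := by
      rw [hW]
      simp [inner_add_left]
    rw [hadd, hterm1, hterm2]
    have e1 : ⟪X (S' w), u⟫ = (lam : ℂ) * (‖w‖:ℂ)^2 + ⟪S' w, r⟫ := by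
      rw [hsymmX (S' w) u, hXu, inner_add_right, inner_smul_right, hnormSw]
    have e2 : ⟪X u, S' w⟫ = (lam : ℂ) * (‖w‖:ℂ)^2 + ⟪r, S' w⟫ := by
      rw [hXu, inner_add_left, inner_smul_left, Complex.conj_ofReal, hnormSw']
    rw [e1, e2]
    ring
  -- norms
  have hwnorm : ‖S' w‖ ≤ ‖S'‖ ^ 2 := by
    calc ‖S' w‖ ≤ ‖S'‖ * ‖w‖ := le_opNorm S' w
      _ = ‖S'‖ * ‖S' u‖ := by rw [hwdef]
      _ ≤ ‖S'‖ * (‖S'‖ * ‖u‖) := by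
          apply mul_le_mul_of_nonneg_left (le_opNorm S' u) (norm_nonneg S')
      _ = ‖S'‖ ^ 2 := by rw [hu1]; ring
  have hrc : ‖r‖ < c := hur
  have hEle : ‖⟪S' w, r⟫ + ⟪r, S' w⟫‖ ≤ 2 * ‖S'‖ ^ 2 * c := by
    calc ‖⟪S' w, r⟫ + ⟪r, S' w⟫‖ ≤ ‖⟪S' w, r⟫‖ + ‖⟪r, S' w⟫‖ := norm_add_le _ _
      _ ≤ ‖S' w‖ * ‖r‖ + ‖r‖ * ‖S' w‖ := by
          gcongr
          · exact norm_inner_le_norm _ _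
          · exact norm_inner_le_norm _ _
      _ ≤ ‖S'‖^2 * c + c * ‖S'‖^2 := by
          have h0 : (0:ℝ) ≤ ‖S'‖^2 := by positivity
          have h1 : (0:ℝ) ≤ ‖r‖ := norm_nonneg r
          have h2 : (0:ℝ) ≤ ‖S' w‖ := norm_nonneg _
          nlinarith [hrc.le, hwnorm, hc.le]
      _ = 2 * ‖S'‖ ^ 2 * c := by ring
  -- combine
  have hcast : ((2 * lam * ‖w‖ ^ 2 : ℝ) : ℂ) = ⟪W w, w⟫ - (⟪S' w, r⟫ + ⟪r, S' w⟫) := by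
    rw [hexp]
    push_cast
    ring
  have habs1 : |2 * lam * ‖w‖ ^ 2| ≤ ‖W‖ * ‖w‖ ^ 2 + 2 * ‖S'‖ ^ 2 * c := by
    calc |2 * lam * ‖w‖ ^ 2| = ‖((2 * lam * ‖w‖ ^ 2 : ℝ) : ℂ)‖ := by
          rw [Complex.norm_real, Real.norm_eq_abs]
      _ = ‖⟪W w, w⟫ - (⟪S' w, r⟫ + ⟪r, S' w⟫)‖ := by rw [hcast]
      _ ≤ ‖⟪W w, w⟫‖ + ‖⟪S' w, r⟫ + ⟪r, S' w⟫‖ := norm_sub_le _ _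
      _ ≤ ‖W‖ * ‖w‖ ^ 2 + 2 * ‖S'‖ ^ 2 * c := by
          gcongr
          calc ‖⟪W w, w⟫‖ ≤ ‖W w‖ * ‖w‖ := norm_inner_le_norm _ _
            _ ≤ (‖W‖ * ‖w‖) * ‖w‖ := by
                apply mul_le_mul_of_nonneg_right (le_opNorm W w) (norm_nonneg w)
            _ = ‖W‖ * ‖w‖ ^ 2 := by ring
  have habs2 : |2 * lam * ‖w‖ ^ 2| = 2 * ‖X‖ * ‖w‖ ^ 2 := by
    rw [abs_mul, abs_mul, abs_two, hlam, abs_of_nonneg (sq_nonneg ‖w‖)]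
  have hkey : 2 * ‖X‖ * ‖w‖ ^ 2 ≤ ‖W‖ * ‖w‖ ^ 2 + 2 * ‖S'‖ ^ 2 * c := by
    rw [← habs2]; exact habs1
  have hSw1 : 1 ≤ ‖S‖ * ‖w‖ := by
    calc (1:ℝ) = ‖u‖ := hu1.symm
      _ = ‖S w‖ := by rw [hSw]
      _ ≤ ‖S‖ * ‖w‖ := le_opNorm S w
  have hsq : 1 ≤ ‖S‖ ^ 2 * ‖w‖ ^ 2 := by nlinarith [hSw1, norm_nonneg w, norm_nonneg S]
  have hceq : c * (2 * ‖S‖ ^ 2 * ‖S'‖ ^ 2 + 1) = η := by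
    rw [hcdef]
    field_simp
  rcases le_or_gt (2 * ‖X‖) ‖W‖ with hle | hlt
  · linarith
  · -- multiply hkey through
    have hfac : 0 < 2 * ‖X‖ - ‖W‖ := by linarith
    have h8 : (2 * ‖X‖ - ‖W‖) * ‖w‖ ^ 2 ≤ 2 * ‖S'‖ ^ 2 * c := by nlinarith [hkey]
    have h9 : (2 * ‖X‖ - ‖W‖) * (‖S‖ ^ 2 * ‖w‖ ^ 2) ≤ 2 * (‖S‖ ^ 2 * ‖S'‖ ^ 2) * c := by
      have h12 := mul_le_mul_of_nonneg_right h8 (sq_nonneg ‖S‖)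
      calc (2 * ‖X‖ - ‖W‖) * (‖S‖ ^ 2 * ‖w‖ ^ 2)
          = (2 * ‖X‖ - ‖W‖) * ‖w‖ ^ 2 * ‖S‖ ^ 2 := by ring
        _ ≤ 2 * ‖S'‖ ^ 2 * c * ‖S‖ ^ 2 := h12
        _ = 2 * (‖S‖ ^ 2 * ‖S'‖ ^ 2) * c := by ring
    have h10 : 2 * ‖X‖ - ‖W‖ ≤ 2 * (‖S‖ ^ 2 * ‖S'‖ ^ 2) * c := by
      have h11 : (2 * ‖X‖ - ‖W‖) * 1 ≤ (2 * ‖X‖ - ‖W‖) * (‖S‖ ^ 2 * ‖w‖ ^ 2) :=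
        mul_le_mul_of_nonneg_left hsq hfac.le
      rw [mul_one] at h11
      exact h11.trans h9
    have hDc : 2 * (‖S‖ ^ 2 * ‖S'‖ ^ 2) * c = η - c := by linear_combination hceq
    linarith [h10, hDc, hc]

/-! ### 2×2 block dilation -/

variable (H) in
private noncomputable def eK : WithLp 2 (H × H) ≃L[ℂ] H × H :=
  WithLp.prodContinuousLinearEquiv 2 ℂ H H

private noncomputable def diagOp (S T : H →L[ℂ] H) :
    WithLp 2 (H × H) →L[ℂ] WithLp 2 (H × H) :=
  ((eK H).symm : (H × H) →L[ℂ] WithLp 2 (H × H)) ∘L (S.prodMap T) ∘L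
    ((eK H) : WithLp 2 (H × H) →L[ℂ] (H × H))

private noncomputable def offOp (X : H →L[ℂ] H) :
    WithLp 2 (H × H) →L[ℂ] WithLp 2 (H × H) :=
  ((eK H).symm : (H × H) →L[ℂ] WithLp 2 (H × H)) ∘L
    ((X ∘L ContinuousLinearMap.snd ℂ H H).prod
      ((ContinuousLinearMap.adjoint X) ∘L ContinuousLinearMap.fst ℂ H H)) ∘L
    ((eK H) : WithLp 2 (H × H) →L[ℂ] (H × H))

private lemma diagOp_apply_fst (S T : H →L[ℂ] H) (v : WithLp 2 (H × H)) :
    (diagOp S T v).fst = S v.fst := rfl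

private lemma diagOp_apply_snd (S T : H →L[ℂ] H) (v : WithLp 2 (H × H)) :
    (diagOp S T v).snd = T v.snd := rfl

private lemma offOp_apply_fst (X : H →L[ℂ] H) (v : WithLp 2 (H × H)) :
    (offOp X v).fst = X v.snd := rfl

private lemma offOp_apply_snd (X : H →L[ℂ] H) (v : WithLp 2 (H × H)) :
    (offOp X v).snd = (ContinuousLinearMap.adjoint X) v.fst := rfl

private lemma prodext {v w : WithLp 2 (H × H)} (h1 : v.fst = w.fst) (h2 : v.snd = w.snd) : v = w := by
  apply (WithLp.equiv 2 (H × H)).injective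
  apply Prod.ext <;> assumption

private lemma isSelfAdjoint_diagOp {S T : H →L[ℂ] H} (hS : IsSelfAdjoint S)
    (hT : IsSelfAdjoint T) : IsSelfAdjoint (diagOp S T) := by
  rw [isSelfAdjoint_iff_isSymmetric]
  intro v w
  have hsS : ∀ a b : H, ⟪S a, b⟫ = ⟪a, S b⟫ :=
    fun a b => isSelfAdjoint_iff_isSymmetric.mp hS a b
  have hsT : ∀ a b : H, ⟪T a, b⟫ = ⟪a, T b⟫ :=
    fun a b => isSelfAdjoint_iff_isSymmetric.mp hT a b
  show ⟪diagOp S T v, w⟫ = ⟪v, diagOp S T w⟫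
  rw [WithLp.prod_inner_apply, WithLp.prod_inner_apply]
  simp only [WithLp.ofLp_fst, WithLp.ofLp_snd]
  rw [diagOp_apply_fst, diagOp_apply_snd,
    diagOp_apply_fst, diagOp_apply_snd, hsS, hsT]

private lemma heinz_sq_le_helper {a b : ℝ} (ha : 0 ≤ a) (hb : 0 ≤ b) (h : a^2 ≤ b^2) : a ≤ b := by
  nlinarith

private lemma heinz_sq_eq_helper {a b : ℝ} (ha : 0 ≤ a) (hb : 0 ≤ b) (h : a^2 = b^2) : a = b := by
  nlinarith

private lemma isSelfAdjoint_offOp (X : H →L[ℂ] H) : IsSelfAdjoint (offOp X) := by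
  rw [isSelfAdjoint_iff_isSymmetric]
  intro v w
  show ⟪offOp X v, w⟫ = ⟪v, offOp X w⟫
  rw [WithLp.prod_inner_apply, WithLp.prod_inner_apply]
  simp only [WithLp.ofLp_fst, WithLp.ofLp_snd]
  rw [offOp_apply_fst, offOp_apply_snd,
    offOp_apply_fst, offOp_apply_snd]
  have e1 : ⟪X v.snd, w.fst⟫ = ⟪v.snd, (ContinuousLinearMap.adjoint X) w.fst⟫ :=
    (ContinuousLinearMap.adjoint_inner_right X v.snd w.fst).symm
  have e2 : ⟪(ContinuousLinearMap.adjoint X) v.fst, w.snd⟫ = ⟪v.fst, X w.snd⟫ :=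
    ContinuousLinearMap.adjoint_inner_left X w.snd v.fst
  rw [e1, e2]
  ring

private lemma norm_offOp (X : H →L[ℂ] H) : ‖offOp X‖ = ‖X‖ := by
  apply le_antisymm
  · apply opNorm_le_bound _ (norm_nonneg X)
    intro v
    have h1 : ‖offOp X v‖ ^ 2 ≤ (‖X‖ * ‖v‖) ^ 2 := by
      rw [WithLp.prod_norm_sq_eq_of_L2, offOp_apply_fst, offOp_apply_snd]
      have e1 : ‖X v.snd‖ ≤ ‖X‖ * ‖v.snd‖ := le_opNorm X v.snd
      have e2 : ‖(ContinuousLinearMap.adjoint X) v.fst‖ ≤ ‖X‖ * ‖v.fst‖ := by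
        calc ‖(ContinuousLinearMap.adjoint X) v.fst‖
            ≤ ‖ContinuousLinearMap.adjoint X‖ * ‖v.fst‖ := le_opNorm _ _
          _ = ‖X‖ * ‖v.fst‖ := by rw [LinearIsometryEquiv.norm_map]
      have e3 : ‖v.fst‖ ^ 2 + ‖v.snd‖ ^ 2 = ‖v‖ ^ 2 := (WithLp.prod_norm_sq_eq_of_L2 v).symm
      have p1 : ‖X v.snd‖ ^ 2 ≤ (‖X‖ * ‖v.snd‖) ^ 2 := pow_le_pow_left₀ (norm_nonneg _) e1 2
      have p2 : ‖(ContinuousLinearMap.adjoint X) v.fst‖ ^ 2 ≤ (‖X‖ * ‖v.fst‖) ^ 2 :=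
        pow_le_pow_left₀ (norm_nonneg _) e2 2
      nlinarith [p1, p2, e3, sq_nonneg ‖X‖]
    have h2 : 0 ≤ ‖X‖ * ‖v‖ := by positivity
    exact heinz_sq_le_helper (norm_nonneg _) h2 h1
  · apply opNorm_le_bound _ (norm_nonneg (offOp X))
    intro y
    set v : WithLp 2 (H × H) := (WithLp.equiv 2 (H × H)).symm (0, y) with hv
    have hv1 : v.fst = 0 := rfl
    have hv2 : v.snd = y := rfl
    have hnv : ‖v‖ = ‖y‖ := by
      have := WithLp.prod_norm_sq_eq_of_L2 v
      rw [hv1, hv2] at this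
      simp only [norm_zero] at this
      apply heinz_sq_eq_helper (norm_nonneg v) (norm_nonneg y)
      rw [this]; ring
    have happ : ‖offOp X v‖ ^ 2 = ‖X y‖ ^ 2 := by
      rw [WithLp.prod_norm_sq_eq_of_L2, offOp_apply_fst, offOp_apply_snd, hv1, hv2]
      simp
    have h3 : ‖X y‖ = ‖offOp X v‖ :=
      heinz_sq_eq_helper (norm_nonneg (X y)) (norm_nonneg (offOp X v)) happ.symm
    rw [h3, ← hnv]
    exact le_opNorm _ v

private lemma diag_mul_diag (S T S' T' : H →L[ℂ] H) :
    diagOp S T * diagOp S' T' = diagOp (S * S') (T * T') := by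
  ext v
  apply prodext <;> rfl

private lemma diag_one : diagOp (1 : H →L[ℂ] H) 1 = 1 := by
  ext v
  apply prodext <;> rfl

private lemma diag_off_diag_sum (S T S' T' X : H →L[ℂ] H) (hS : IsSelfAdjoint S)
    (hT : IsSelfAdjoint T) (hS' : IsSelfAdjoint S') (hT' : IsSelfAdjoint T') :
    diagOp S T * offOp X * diagOp S' T' + diagOp S' T' * offOp X * diagOp S T
      = offOp (S * X * T' + S' * X * T) := by
  have hadj : ContinuousLinearMap.adjoint (S * X * T' + S' * X * T)
      = T' * (ContinuousLinearMap.adjoint X) * S + T * (ContinuousLinearMap.adjoint X) * S' := by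
    rw [map_add]
    have e1 : ContinuousLinearMap.adjoint (S * X * T')
        = T' * (ContinuousLinearMap.adjoint X) * S := by
      rw [← ContinuousLinearMap.star_eq_adjoint, star_mul, star_mul,
        ← ContinuousLinearMap.star_eq_adjoint, hT'.star_eq, hS.star_eq]
      rw [mul_assoc]
    have e2 : ContinuousLinearMap.adjoint (S' * X * T)
        = T * (ContinuousLinearMap.adjoint X) * S' := by
      rw [← ContinuousLinearMap.star_eq_adjoint, star_mul, star_mul,
        ← ContinuousLinearMap.star_eq_adjoint, hT.star_eq, hS'.star_eq]
      rw [mul_assoc]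
    rw [e1, e2]
  ext v
  apply prodext
  · show S (X (T' v.snd)) + S' (X (T v.snd)) = (S * X * T' + S' * X * T) v.snd
    simp [ContinuousLinearMap.mul_apply]
  · show T (adjoint X (S' v.fst)) + T' (adjoint X (S v.fst))
        = (ContinuousLinearMap.adjoint (S * X * T' + S' * X * T)) v.fst
    rw [hadj]
    simp [ContinuousLinearMap.mul_apply]
    abel

/-- Two-sided CPR inequality. -/
private lemma cpr_two_sided (S T S' T' X : H →L[ℂ] H) (hS : IsSelfAdjoint S)
    (hT : IsSelfAdjoint T) (hS' : IsSelfAdjoint S') (hT' : IsSelfAdjoint T')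
    (hSS' : S * S' = 1) (hS'S : S' * S = 1) (hTT' : T * T' = 1) (hT'T : T' * T = 1) :
    2 * ‖X‖ ≤ ‖S * X * T' + S' * X * T‖ := by
  have key := cpr_selfAdjoint (diagOp S T) (diagOp S' T') (offOp X)
    (isSelfAdjoint_diagOp hS hT) (isSelfAdjoint_diagOp hS' hT')
    (by rw [diag_mul_diag, hSS', hTT', diag_one])
    (by rw [diag_mul_diag, hS'S, hT'T, diag_one])
    (isSelfAdjoint_offOp X)
  rw [norm_offOp, diag_off_diag_sum S T S' T' X hS hT hS' hT', norm_offOp] at key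
  exact key

/-! ### arithmetic-geometric mean operator inequality -/

set_option maxHeartbeats 2000000 in
private lemma agm [Nontrivial H] (P Q Y : H →L[ℂ] H) (hP : 0 ≤ P) (hQ : 0 ≤ Q) :
    2 * ‖P * Y * Q‖ ≤ ‖P * P * Y + Y * (Q * Q)‖ := by
  apply le_of_forall_pos_le_add
  intro η hη
  set C : ℝ := 4 * ‖P‖ * ‖Y‖ + 4 * ‖Y‖ * ‖Q‖ + 4 * ‖Y‖ with hC
  have hC0 : 0 ≤ C := by positivity
  set εr : ℝ := min 1 (η / (C + 1)) with hεr
  have hεr0 : 0 < εr := by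
    apply lt_min one_pos
    positivity
  set ε : ℝ≥0 := ⟨εr, hεr0.le⟩ with hε
  have hεcoe : (ε : ℝ) = εr := rfl
  have hε0 : 0 < ε := hεr0
  have hε1 : (ε : ℝ) ≤ 1 := by rw [hεcoe, hεr]; exact min_le_left _ _
  have hεC : (ε : ℝ) * (C + 1) ≤ η := by
    rw [hεcoe]
    have h1 : εr ≤ η / (C + 1) := min_le_right _ _
    calc εr * (C + 1) ≤ (η / (C + 1)) * (C + 1) := by
          apply mul_le_mul_of_nonneg_right h1 (by positivity)
      _ = η := by field_simp
  have hcont : Continuous (fun x : ℝ≥0 => (x + ε)⁻¹) :=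
    (continuous_id.add continuous_const).inv₀ (fun x => (add_pos_of_nonneg_of_pos (zero_le : 0 ≤ x) hε0).ne')
  -- regularized operators
  set c : H →L[ℂ] H := algebraMap ℝ≥0 (H →L[ℂ] H) ε with hcop
  set S : H →L[ℂ] H := P + c with hSdef
  set S' : H →L[ℂ] H := cfc (fun x : ℝ≥0 => (x + ε)⁻¹) P with hS'def
  set T : H →L[ℂ] H := Q + c with hTdef
  set T' : H →L[ℂ] H := cfc (fun x : ℝ≥0 => (x + ε)⁻¹) Q with hT'def
  have hScfc : cfc (fun x : ℝ≥0 => x + ε) P = S := by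
    rw [cfc_add P (fun x => x) (fun _ => ε) (by fun_prop) (by fun_prop),
      cfc_id' ℝ≥0 P hP, cfc_const ε P hP]
  have hTcfc : cfc (fun x : ℝ≥0 => x + ε) Q = T := by
    rw [cfc_add Q (fun x => x) (fun _ => ε) (by fun_prop) (by fun_prop),
      cfc_id' ℝ≥0 Q hQ, cfc_const ε Q hQ]
  have hSS' : S * S' = 1 := by
    rw [← hScfc, hS'def, ← cfc_mul _ _ P (by fun_prop) hcont.continuousOn]
    rw [show (fun x : ℝ≥0 => (x + ε) * (x + ε)⁻¹) = fun _ : ℝ≥0 => 1 from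
      funext fun x => mul_inv_cancel₀ (by positivity)]
    exact cfc_const_one ℝ≥0 P hP
  have hS'S : S' * S = 1 := by
    rw [← hScfc, hS'def, ← cfc_mul _ _ P hcont.continuousOn (by fun_prop)]
    rw [show (fun x : ℝ≥0 => (x + ε)⁻¹ * (x + ε)) = fun _ : ℝ≥0 => 1 from
      funext fun x => inv_mul_cancel₀ (by positivity)]
    exact cfc_const_one ℝ≥0 P hP
  have hTT' : T * T' = 1 := by
    rw [← hTcfc, hT'def, ← cfc_mul _ _ Q (by fun_prop) hcont.continuousOn]
    rw [show (fun x : ℝ≥0 => (x + ε) * (x + ε)⁻¹) = fun _ : ℝ≥0 => 1 from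
      funext fun x => mul_inv_cancel₀ (by positivity)]
    exact cfc_const_one ℝ≥0 Q hQ
  have hT'T : T' * T = 1 := by
    rw [← hTcfc, hT'def, ← cfc_mul _ _ Q hcont.continuousOn (by fun_prop)]
    rw [show (fun x : ℝ≥0 => (x + ε)⁻¹ * (x + ε)) = fun _ : ℝ≥0 => 1 from
      funext fun x => inv_mul_cancel₀ (by positivity)]
    exact cfc_const_one ℝ≥0 Q hQ
  have hSsa : IsSelfAdjoint S := IsSelfAdjoint.of_nonneg (hScfc ▸ cfc_predicate _ P)
  have hS'sa : IsSelfAdjoint S' := IsSelfAdjoint.of_nonneg (cfc_predicate _ P)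
  have hTsa : IsSelfAdjoint T := IsSelfAdjoint.of_nonneg (hTcfc ▸ cfc_predicate _ Q)
  have hT'sa : IsSelfAdjoint T' := IsSelfAdjoint.of_nonneg (cfc_predicate _ Q)
  -- the CPR step
  have key := cpr_two_sided S T S' T' (S * Y * T) hSsa hTsa hS'sa hT'sa hSS' hS'S hTT' hT'T
  have e1 : S * (S * Y * T) * T' = S * S * Y := by
    have : S * (S * Y * T) * T' = (S * S * Y) * (T * T') := by noncomm_ring
    rw [this, hTT', mul_one]
  have e2 : S' * (S * Y * T) * T = Y * (T * T) := by
    have : S' * (S * Y * T) * T = (S' * S) * (Y * (T * T)) := by noncomm_ring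
    rw [this, hS'S, one_mul]
  rw [e1, e2] at key
  -- norm of c
  have hcnorm : ‖c‖ ≤ (ε : ℝ) := by
    have hccfc : cfc (fun _ : ℝ≥0 => ε) P = c := cfc_const ε P hP
    have h2 : ‖cfc (fun _ : ℝ≥0 => ε) P‖₊ ≤ ε := nnnorm_cfc_nnreal_le (fun x _ => le_refl ε)
    rw [← hccfc]
    exact_mod_cast h2
  -- error bounds
  have hd1 : ‖S * Y * T - P * Y * Q‖ ≤ (ε:ℝ) * ‖Y‖ * ‖Q‖ + ‖P‖ * ‖Y‖ * (ε:ℝ)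
      + (ε:ℝ) * ‖Y‖ * (ε:ℝ) := by
    have hexp : S * Y * T - P * Y * Q = c * Y * Q + P * Y * c + c * Y * c := by
      rw [hSdef, hTdef]; noncomm_ring
    rw [hexp]
    calc ‖c * Y * Q + P * Y * c + c * Y * c‖
        ≤ ‖c * Y * Q + P * Y * c‖ + ‖c * Y * c‖ := norm_add_le _ _
      _ ≤ ‖c * Y * Q‖ + ‖P * Y * c‖ + ‖c * Y * c‖ := by
          gcongr; exact norm_add_le _ _
      _ ≤ (ε:ℝ) * ‖Y‖ * ‖Q‖ + ‖P‖ * ‖Y‖ * (ε:ℝ) + (ε:ℝ) * ‖Y‖ * (ε:ℝ) := by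
          gcongr
          · calc ‖c * Y * Q‖ ≤ ‖c * Y‖ * ‖Q‖ := norm_mul_le _ _
              _ ≤ (‖c‖ * ‖Y‖) * ‖Q‖ := by
                  apply mul_le_mul_of_nonneg_right (norm_mul_le _ _) (norm_nonneg _)
              _ ≤ (ε:ℝ) * ‖Y‖ * ‖Q‖ := by
                  gcongr
          · calc ‖P * Y * c‖ ≤ ‖P * Y‖ * ‖c‖ := norm_mul_le _ _
              _ ≤ (‖P‖ * ‖Y‖) * ‖c‖ := by
                  apply mul_le_mul_of_nonneg_right (norm_mul_le _ _) (norm_nonneg _)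
              _ ≤ ‖P‖ * ‖Y‖ * (ε:ℝ) := by gcongr
          · calc ‖c * Y * c‖ ≤ ‖c * Y‖ * ‖c‖ := norm_mul_le _ _
              _ ≤ (‖c‖ * ‖Y‖) * ‖c‖ := by
                  apply mul_le_mul_of_nonneg_right (norm_mul_le _ _) (norm_nonneg _)
              _ ≤ (ε:ℝ) * ‖Y‖ * (ε:ℝ) := by gcongr
  have hd2 : ‖(S * S * Y + Y * (T * T)) - (P * P * Y + Y * (Q * Q))‖
      ≤ (2 * (ε:ℝ) * ‖P‖ + (ε:ℝ) * (ε:ℝ)) * ‖Y‖ + ‖Y‖ * (2 * (ε:ℝ) * ‖Q‖ + (ε:ℝ) * (ε:ℝ)) := by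
    have hexp : (S * S * Y + Y * (T * T)) - (P * P * Y + Y * (Q * Q))
        = (c * P + P * c + c * c) * Y + Y * (c * Q + Q * c + c * c) := by
      rw [hSdef, hTdef]; noncomm_ring
    rw [hexp]
    have hb1 : ‖c * P + P * c + c * c‖ ≤ 2 * (ε:ℝ) * ‖P‖ + (ε:ℝ) * (ε:ℝ) := by
      calc ‖c * P + P * c + c * c‖ ≤ ‖c * P‖ + ‖P * c‖ + ‖c * c‖ :=
            (norm_add_le _ _).trans (by gcongr; exact norm_add_le _ _)
        _ ≤ ‖c‖ * ‖P‖ + ‖P‖ * ‖c‖ + ‖c‖ * ‖c‖ := by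
            gcongr <;> exact norm_mul_le _ _
        _ ≤ (ε:ℝ) * ‖P‖ + ‖P‖ * (ε:ℝ) + (ε:ℝ) * (ε:ℝ) := by
            gcongr <;> first | exact hcnorm | exact norm_nonneg _
        _ = 2 * (ε:ℝ) * ‖P‖ + (ε:ℝ) * (ε:ℝ) := by ring
    have hb2 : ‖c * Q + Q * c + c * c‖ ≤ 2 * (ε:ℝ) * ‖Q‖ + (ε:ℝ) * (ε:ℝ) := by
      calc ‖c * Q + Q * c + c * c‖ ≤ ‖c * Q‖ + ‖Q * c‖ + ‖c * c‖ :=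
            (norm_add_le _ _).trans (by gcongr; exact norm_add_le _ _)
        _ ≤ ‖c‖ * ‖Q‖ + ‖Q‖ * ‖c‖ + ‖c‖ * ‖c‖ := by
            gcongr <;> exact norm_mul_le _ _
        _ ≤ (ε:ℝ) * ‖Q‖ + ‖Q‖ * (ε:ℝ) + (ε:ℝ) * (ε:ℝ) := by
            gcongr <;> first | exact hcnorm | exact norm_nonneg _
        _ = 2 * (ε:ℝ) * ‖Q‖ + (ε:ℝ) * (ε:ℝ) := by ring
    calc ‖(c * P + P * c + c * c) * Y + Y * (c * Q + Q * c + c * c)‖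
        ≤ ‖(c * P + P * c + c * c) * Y‖ + ‖Y * (c * Q + Q * c + c * c)‖ := norm_add_le _ _
      _ ≤ ‖c * P + P * c + c * c‖ * ‖Y‖ + ‖Y‖ * ‖c * Q + Q * c + c * c‖ := by
          gcongr <;> exact norm_mul_le _ _
      _ ≤ (2 * (ε:ℝ) * ‖P‖ + (ε:ℝ) * (ε:ℝ)) * ‖Y‖
            + ‖Y‖ * (2 * (ε:ℝ) * ‖Q‖ + (ε:ℝ) * (ε:ℝ)) := by
          gcongr <;> first | exact hb1 | exact hb2 | exact norm_nonneg _
  -- combine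
  have t1 : ‖P * Y * Q‖ ≤ ‖S * Y * T‖ + ‖S * Y * T - P * Y * Q‖ := by
    have hy : S * Y * T - (S * Y * T - P * Y * Q) = P * Y * Q := by abel
    calc ‖P * Y * Q‖ = ‖S * Y * T - (S * Y * T - P * Y * Q)‖ := by rw [hy]
      _ ≤ ‖S * Y * T‖ + ‖S * Y * T - P * Y * Q‖ := norm_sub_le _ _
  have t2 : ‖S * S * Y + Y * (T * T)‖
      ≤ ‖P * P * Y + Y * (Q * Q)‖ + ‖(S * S * Y + Y * (T * T)) - (P * P * Y + Y * (Q * Q))‖ := by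
    have hx : (P * P * Y + Y * (Q * Q)) + ((S * S * Y + Y * (T * T)) - (P * P * Y + Y * (Q * Q)))
        = S * S * Y + Y * (T * T) := by abel
    calc ‖S * S * Y + Y * (T * T)‖
        = ‖(P * P * Y + Y * (Q * Q)) + ((S * S * Y + Y * (T * T)) - (P * P * Y + Y * (Q * Q)))‖ := by
          rw [hx]
      _ ≤ _ := norm_add_le _ _
  have hεsq : (ε:ℝ) * (ε:ℝ) ≤ (ε:ℝ) := by
    nlinarith [hε1, hε0.le, NNReal.coe_nonneg ε]
  have hεpos : (0:ℝ) ≤ (ε:ℝ) := NNReal.coe_nonneg ε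
  nlinarith [key, t1, t2, hd1, hd2, hεC, hεsq, hεpos, norm_nonneg Y, norm_nonneg P,
    norm_nonneg Q, mul_le_mul_of_nonneg_left hεsq (mul_nonneg (by norm_num : (0:ℝ) ≤ 4) (norm_nonneg Y))]

/-! ### midpoint inequality -/

set_option maxHeartbeats 2000000 in
private lemma midpoint_ineq [Nontrivial H] (A B X : H →L[ℂ] H) (hA : 0 ≤ A) (hB : 0 ≤ B)
    {r s : ℝ} (hr0 : 0 ≤ r) (hs1 : s ≤ 1) (hrs : r ≤ s) :
    ‖A ^ ((r+s)/2) * X * B ^ (1-(r+s)/2) + A ^ (1-(r+s)/2) * X * B ^ ((r+s)/2)‖ ≤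
      (‖A ^ r * X * B ^ (1-r) + A ^ (1-r) * X * B ^ r‖
        + ‖A ^ s * X * B ^ (1-s) + A ^ (1-s) * X * B ^ s‖) / 2 := by
  rcases eq_or_lt_of_le hrs with rfl | hlt
  · have hm : (r + r) / 2 = r := by ring
    rw [hm]
    linarith [norm_nonneg (A ^ r * X * B ^ (1-r) + A ^ (1-r) * X * B ^ r)]
  · have h1s : (0:ℝ) ≤ 1 - s := by linarith
    set δ : ℝ := (s - r) / 2 with hδdef
    have hδ : 0 < δ := by rw [hδdef]; linarith
    set Y : H →L[ℂ] H := A ^ r * X * B ^ (1-s) + A ^ (1-s) * X * B ^ r with hY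
    have sand : ∀ (u v : ℝ), 0 ≤ u → 0 ≤ v →
        A ^ δ * (A ^ u * X * B ^ v) * B ^ δ = A ^ (δ + u) * X * B ^ (v + δ) := by
      intro u v hu hv
      have h1 : A ^ δ * A ^ u = A ^ (δ + u) :=
        rpow_mul_rpow A hA hδ.le hu (add_pos_of_pos_of_nonneg hδ hu).ne'
      have h2 : B ^ v * B ^ δ = B ^ (v + δ) :=
        rpow_mul_rpow B hB hv hδ.le (add_pos_of_nonneg_of_pos hv hδ).ne'
      calc A ^ δ * (A ^ u * X * B ^ v) * B ^ δ
          = (A ^ δ * A ^ u) * X * (B ^ v * B ^ δ) := by noncomm_ring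
        _ = _ := by rw [h1, h2]
    have hδδ : (0:ℝ) < δ + δ := by linarith
    have sandL : ∀ (u v : ℝ), 0 ≤ u → 0 ≤ v →
        A ^ (δ+δ) * (A ^ u * X * B ^ v) = A ^ (δ + δ + u) * X * B ^ v := by
      intro u v hu hv
      have h1 : A ^ (δ+δ) * A ^ u = A ^ ((δ+δ) + u) :=
        rpow_mul_rpow A hA hδδ.le hu (add_pos_of_pos_of_nonneg hδδ hu).ne'
      calc A ^ (δ+δ) * (A ^ u * X * B ^ v) = (A ^ (δ+δ) * A ^ u) * X * B ^ v := by noncomm_ring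
        _ = _ := by rw [h1]
    have sandR : ∀ (u v : ℝ), 0 ≤ u → 0 ≤ v →
        (A ^ u * X * B ^ v) * B ^ (δ+δ) = A ^ u * X * B ^ (v + (δ + δ)) := by
      intro u v hu hv
      have h2 : B ^ v * B ^ (δ+δ) = B ^ (v + (δ+δ)) :=
        rpow_mul_rpow B hB hv hδδ.le (add_pos_of_nonneg_of_pos hv hδδ).ne'
      calc (A ^ u * X * B ^ v) * B ^ (δ+δ) = A ^ u * X * (B ^ v * B ^ (δ+δ)) := by noncomm_ring
        _ = _ := by rw [h2]
    have hAδ : A ^ δ * A ^ δ = A ^ (δ + δ) :=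
      rpow_mul_rpow A hA hδ.le hδ.le hδδ.ne'
    have hBδ : B ^ δ * B ^ δ = B ^ (δ + δ) :=
      rpow_mul_rpow B hB hδ.le hδ.le hδδ.ne'
    -- exponent identities
    have e_a : δ + r = (r+s)/2 := by rw [hδdef]; ring
    have e_b : (1-s) + δ = 1-(r+s)/2 := by rw [hδdef]; ring
    have e_c : δ + (1-s) = 1-(r+s)/2 := by rw [hδdef]; ring
    have e_d : r + δ = (r+s)/2 := by rw [hδdef]; ring
    have e_e : δ + δ + r = s := by rw [hδdef]; ring
    have e_f : δ + δ + (1-s) = 1 - r := by rw [hδdef]; ring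
    have e_g : (1-s) + (δ + δ) = 1 - r := by rw [hδdef]; ring
    have e_h : r + (δ + δ) = s := by rw [hδdef]; ring
    have claim1 : A ^ δ * Y * B ^ δ
        = A ^ ((r+s)/2) * X * B ^ (1-(r+s)/2) + A ^ (1-(r+s)/2) * X * B ^ ((r+s)/2) := by
      have hexp : A ^ δ * Y * B ^ δ
          = A ^ δ * (A ^ r * X * B ^ (1-s)) * B ^ δ
            + A ^ δ * (A ^ (1-s) * X * B ^ r) * B ^ δ := by
        rw [hY]; noncomm_ring
      rw [hexp, sand r (1-s) hr0 h1s, sand (1-s) r h1s hr0, e_a, e_b, e_c, e_d]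
    have claim2 : A ^ δ * A ^ δ * Y + Y * (B ^ δ * B ^ δ)
        = (A ^ s * X * B ^ (1-s) + A ^ (1-s) * X * B ^ s)
          + (A ^ r * X * B ^ (1-r) + A ^ (1-r) * X * B ^ r) := by
      rw [hAδ, hBδ]
      have hexp : A ^ (δ+δ) * Y + Y * B ^ (δ+δ)
          = A ^ (δ+δ) * (A ^ r * X * B ^ (1-s)) + A ^ (δ+δ) * (A ^ (1-s) * X * B ^ r)
            + ((A ^ r * X * B ^ (1-s)) * B ^ (δ+δ) + (A ^ (1-s) * X * B ^ r) * B ^ (δ+δ)) := by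
        rw [hY]; noncomm_ring
      rw [hexp, sandL r (1-s) hr0 h1s, sandL (1-s) r h1s hr0,
        sandR r (1-s) hr0 h1s, sandR (1-s) r h1s hr0, e_e, e_f, e_g, e_h]
      abel
    have hagm := agm (A ^ δ) (B ^ δ) Y CFC.rpow_nonneg CFC.rpow_nonneg
    rw [claim1] at hagm
    rw [claim2] at hagm
    have htri : ‖(A ^ s * X * B ^ (1-s) + A ^ (1-s) * X * B ^ s)
          + (A ^ r * X * B ^ (1-r) + A ^ (1-r) * X * B ^ r)‖
        ≤ ‖A ^ s * X * B ^ (1-s) + A ^ (1-s) * X * B ^ s‖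
          + ‖A ^ r * X * B ^ (1-r) + A ^ (1-r) * X * B ^ r‖ := norm_add_le _ _
    linarith

/-! ### the Heinz inequality -/

private lemma heinz [Nontrivial H] (A B X : H →L[ℂ] H) (hA : 0 ≤ A) (hB : 0 ≤ B)
    {t : ℝ} (ht : t ∈ Set.Icc (0:ℝ) 1) :
    ‖A ^ t * X * B ^ (1-t) + A ^ (1-t) * X * B ^ t‖ ≤ ‖A * X + X * B‖ := by
  set L : ℝ := ‖A * X + X * B‖ with hL
  set F : ℝ → ℝ := fun u => ‖A ^ u * X * B ^ (1-u) + A ^ (1-u) * X * B ^ u‖ with hF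
  have hF0 : F 0 = L := by
    rw [hF]
    simp only [sub_zero]
    rw [CFC.rpow_zero A hA, CFC.rpow_zero B hB, CFC.rpow_one A hA, CFC.rpow_one B hB,
      one_mul, mul_one, add_comm]
  have hF1 : F 1 = L := by
    rw [hF]
    simp only [sub_self]
    rw [CFC.rpow_zero A hA, CFC.rpow_zero B hB, CFC.rpow_one A hA, CFC.rpow_one B hB,
      one_mul, mul_one]
  set Kc : ℝ := 2 * (max 1 ‖A‖ * (‖X‖ * max 1 ‖B‖)) with hKc
  have hKc0 : 0 ≤ Kc := by positivity
  have hL0 : 0 ≤ L := norm_nonneg _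
  have hFb : ∀ u ∈ Set.Icc (0:ℝ) 1, F u ≤ Kc := by
    rintro u ⟨hu0, hu1⟩
    have h1u0 : (0:ℝ) ≤ 1 - u := by linarith
    have h1u1 : 1 - u ≤ 1 := by linarith
    have hterm : ∀ (x y : ℝ), 0 ≤ x → x ≤ 1 → 0 ≤ y → y ≤ 1 →
        ‖A ^ x * X * B ^ y‖ ≤ max 1 ‖A‖ * (‖X‖ * max 1 ‖B‖) := by
      intro x y hx hx1 hy hy1
      calc ‖A ^ x * X * B ^ y‖ ≤ ‖A ^ x * X‖ * ‖B ^ y‖ := norm_mul_le _ _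
        _ ≤ (‖A ^ x‖ * ‖X‖) * ‖B ^ y‖ := by
            apply mul_le_mul_of_nonneg_right (norm_mul_le _ _) (norm_nonneg _)
        _ ≤ (max 1 ‖A‖ * ‖X‖) * max 1 ‖B‖ := by
            gcongr
            · exact norm_rpow_le A hA hx hx1
            · exact norm_rpow_le B hB hy hy1
        _ = max 1 ‖A‖ * (‖X‖ * max 1 ‖B‖) := by ring
    calc F u ≤ ‖A ^ u * X * B ^ (1-u)‖ + ‖A ^ (1-u) * X * B ^ u‖ := norm_add_le _ _
      _ ≤ max 1 ‖A‖ * (‖X‖ * max 1 ‖B‖) + max 1 ‖A‖ * (‖X‖ * max 1 ‖B‖) := by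
          gcongr
          · exact hterm u (1-u) hu0 hu1 h1u0 h1u1
          · exact hterm (1-u) u h1u0 h1u1 hu0 hu1
      _ = Kc := by rw [hKc]; ring
  have hind : ∀ n : ℕ, ∀ u ∈ Set.Icc (0:ℝ) 1, F u ≤ L + Kc / 2 ^ n := by
    intro n
    induction n with
    | zero =>
      intro u hu
      have := hFb u hu
      simp only [pow_zero, div_one]
      linarith
    | succ n ih =>
      rintro u ⟨hu0, hu1⟩
      have hhalf : Kc / 2 ^ (n+1) = (Kc / 2 ^ n) / 2 := by
        rw [pow_succ]
        ring
      rcases le_or_gt u (1/2) with hcase | hcase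
      · have h2t : (2*u : ℝ) ∈ Set.Icc (0:ℝ) 1 := ⟨by linarith, by linarith⟩
        have hm := midpoint_ineq A B X hA hB (le_refl (0:ℝ)) h2t.2 h2t.1
        have he : (0 + 2*u)/2 = u := by ring
        rw [he] at hm
        have hih := ih (2*u) h2t
        have h0 := hF0
        -- hm : F u ≤ (F 0 + F (2u))/2
        have hm' : F u ≤ (F 0 + F (2*u)) / 2 := hm
        rw [hhalf]
        rw [h0] at hm'
        linarith
      · have hr : (2*u - 1 : ℝ) ∈ Set.Icc (0:ℝ) 1 := ⟨by linarith, by linarith⟩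
        have hm := midpoint_ineq A B X hA hB hr.1 (le_refl (1:ℝ)) hr.2
        have he : (2*u - 1 + 1)/2 = u := by ring
        rw [he] at hm
        have hih := ih (2*u - 1) hr
        have hm' : F u ≤ (F (2*u-1) + F 1) / 2 := hm
        rw [hF1] at hm'
        rw [hhalf]
        linarith
  have hfinal : F t ≤ L := by
    apply le_of_forall_pos_le_add
    intro ε hε
    obtain ⟨n, hn⟩ := pow_unbounded_of_one_lt (Kc / ε) (one_lt_two (α := ℝ))
    have h2n : (0:ℝ) < 2 ^ n := by positivity
    have hlt : Kc / 2 ^ n < ε := by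
      rw [div_lt_iff₀ h2n]
      calc Kc = (Kc / ε) * ε := by field_simp
        _ < 2 ^ n * ε := by
            apply mul_lt_mul_of_pos_right hn hε
        _ = ε * 2 ^ n := by ring
    have := hind n t ht
    linarith
  exact hfinal

end HeinzAux


variable {H : Type*} [NormedAddCommGroup H] [InnerProductSpace ℂ H] [CompleteSpace H]

theorem stmt10 (A B : H →L[ℂ] H) (hA : 0 ≤ A) (hB : 0 ≤ B) (X : H →L[ℂ] H)
    (α : ℝ) (hα : α ∈ Set.Icc (0 : ℝ) 1) :
    ‖A ^ α * X * B ^ (1 - α) + A ^ (1 - α) * X * B ^ α‖ ≤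
        (1/2) * ‖A * X + X * B‖ +
          (1/2) * ‖A ^ α * X * B ^ (1 - α) + A ^ (1 - α) * X * B ^ α‖ ∧
      (1/2) * ‖A * X + X * B‖ +
          (1/2) * ‖A ^ α * X * B ^ (1 - α) + A ^ (1 - α) * X * B ^ α‖ ≤
        ‖A * X + X * B‖ := by
  rcases subsingleton_or_nontrivial H with hsub | hnt
  · have hz : ∀ Z : H →L[ℂ] H, Z = 0 := fun Z => ContinuousLinearMap.ext fun x =>
      Subsingleton.elim _ _
    rw [hz (A ^ α * X * B ^ (1 - α) + A ^ (1 - α) * X * B ^ α), hz (A * X + X * B)]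
    norm_num
  · have h := heinz A B X hA hB hα
    constructor <;>
      linarith [norm_nonneg (A ^ α * X * B ^ (1 - α) + A ^ (1 - α) * X * B ^ α),
        norm_nonneg (A * X + X * B)]
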